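/- Let B be a vector space over ℚ and let F = {a₁, …, a_r} be a finite subset of B. Let S = {Σᵢ mᵢ aᵢ : mᵢ ∈ ℕ} be the subsemigroup generated by F, A = {Σᵢ mᵢ aᵢ : mᵢ ∈ ℤ} the subgroup generated by F, and C = {Σᵢ qᵢ aᵢ : qᵢ ∈ ℚ, qᵢ ≥ 0} the rational convex cone generated by F. Then there exists s ∈ S such that A ∩ (s + C) = s + (A ∩ C) ⊆ S ⊆ A ∩ C. -/

import Mathlib

/-- Khovanskii's theorem: for a finite subset `a₁, …, a_r` of a `ℚ`-vector space, with `S` the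
generated subsemigroup, `A` the generated subgroup and `C` the generated rational convex
cone, there is `s ∈ S` with `A ∩ (s + C) = s + (A ∩ C) ⊆ S ⊆ A ∩ C`. -/
theorem stmt8 (B : Type*) [AddCommGroup B] [Module ℚ B] (r : ℕ) (a : Fin r → B)
    (S A C : Set B)
    (hS : S = {x : B | ∃ m : Fin r → ℕ, x = ∑ i, (m i : ℚ) • a i})
    (hA : A = {x : B | ∃ m : Fin r → ℤ, x = ∑ i, (m i : ℚ) • a i})
    (hC : C = {x : B | ∃ q : Fin r → ℚ, (∀ i, 0 ≤ q i) ∧ x = ∑ i, q i • a i}) :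
    ∃ s ∈ S,
      A ∩ ((fun x => s + x) '' C) = (fun x => s + x) '' (A ∩ C) ∧
      (fun x => s + x) '' (A ∩ C) ⊆ S ∧
      S ⊆ A ∩ C := by
  classical
  subst hS hA hC
  set SS : Set B := {x : B | ∃ m : Fin r → ℕ, x = ∑ i, (m i : ℚ) • a i} with hSS
  set AA : Set B := {x : B | ∃ m : Fin r → ℤ, x = ∑ i, (m i : ℚ) • a i} with hAA
  set CC : Set B := {x : B | ∃ q : Fin r → ℚ, (∀ i, 0 ≤ q i) ∧ x = ∑ i, q i • a i} with hCC
  -- Basic closure facts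
  have memS : ∀ m : Fin r → ℕ, (∑ i, (m i : ℚ) • a i) ∈ SS := fun m => ⟨m, rfl⟩
  have h0S : (0 : B) ∈ SS := ⟨fun _ => 0, by simp⟩
  have haddS : ∀ x ∈ SS, ∀ y ∈ SS, x + y ∈ SS := by
    rintro x ⟨m, rfl⟩ y ⟨m', rfl⟩
    refine ⟨fun i => m i + m' i, ?_⟩
    rw [← Finset.sum_add_distrib]
    refine Finset.sum_congr rfl fun i _ => ?_
    push_cast
    rw [add_smul]
  have hsumS : ∀ (t : Finset B) (g : B → B), (∀ d ∈ t, g d ∈ SS) → (∑ d ∈ t, g d) ∈ SS :=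
    fun t g hg => Finset.sum_induction g (· ∈ SS) (fun u v hu hv => haddS u hu v hv) h0S hg
  have hSA : SS ⊆ AA := by
    rintro x ⟨m, rfl⟩
    exact ⟨fun i => (m i : ℤ), by simp⟩
  have hSC : SS ⊆ CC := by
    rintro x ⟨m, rfl⟩
    exact ⟨fun i => (m i : ℚ), fun i => by positivity, rfl⟩
  have haddA : ∀ x ∈ AA, ∀ y ∈ AA, x + y ∈ AA := by
    rintro x ⟨m, rfl⟩ y ⟨m', rfl⟩
    refine ⟨fun i => m i + m' i, ?_⟩
    rw [← Finset.sum_add_distrib]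
    refine Finset.sum_congr rfl fun i _ => ?_
    push_cast
    rw [add_smul]
  have hsubA : ∀ x ∈ AA, ∀ y ∈ AA, x - y ∈ AA := by
    rintro x ⟨m, rfl⟩ y ⟨m', rfl⟩
    refine ⟨fun i => m i - m' i, ?_⟩
    rw [← Finset.sum_sub_distrib]
    refine Finset.sum_congr rfl fun i _ => ?_
    push_cast
    rw [sub_smul]
  -- the translation trick for a single element of A
  have hshift : ∀ m : Fin r → ℤ, ∃ s ∈ SS, s + (∑ i, (m i : ℚ) • a i) ∈ SS := by
    intro m
    refine ⟨∑ i, (((-m i).toNat : ℕ) : ℚ) • a i, memS _, ?_⟩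
    rw [← Finset.sum_add_distrib]
    refine ⟨fun i => (m i).toNat, Finset.sum_congr rfl fun i _ => ?_⟩
    rw [← add_smul]
    congr 1
    have h : ((m i).toNat : ℚ) - ((-m i).toNat : ℚ) = (m i : ℚ) := by
      exact_mod_cast congrArg (fun z : ℤ => (z : ℚ)) (Int.toNat_sub_toNat_neg (m i))
    push_cast
    linarith
  -- Finite-dimensional setup
  set V := Submodule.span ℚ (Set.range a) with hV
  haveI : FiniteDimensional ℚ V := FiniteDimensional.span_of_finite ℚ (Set.finite_range a)
  have haV : ∀ i, a i ∈ V := fun i => Submodule.subset_span (Set.mem_range_self i)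
  have hmemV : ∀ q : Fin r → ℚ, (∑ i, q i • a i) ∈ V :=
    fun q => Submodule.sum_mem _ fun i _ => Submodule.smul_mem _ _ (haV i)
  set n := Module.finrank ℚ V with hn
  set b : Module.Basis (Fin n) ℚ V := Module.finBasis ℚ V with hb
  set c : Fin r → Fin n → ℚ := fun i j => b.repr ⟨a i, haV i⟩ j with hc
  set N : ℕ := ∏ p : Fin r × Fin n, (c p.1 p.2).den with hNdef
  have hNpos : 0 < (N : ℚ) := by
    have : 0 < N := Finset.prod_pos fun p _ => (c p.1 p.2).pos
    exact_mod_cast this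
  have hcN : ∀ i j, ∃ z : ℤ, c i j * N = z := by
    intro i j
    obtain ⟨k, hk⟩ :=
      Finset.dvd_prod_of_mem (fun p : Fin r × Fin n => (c p.1 p.2).den) (Finset.mem_univ (i, j))
    refine ⟨(c i j).num * k, ?_⟩
    have hkQ : (N : ℚ) = ((c i j).den : ℚ) * (k : ℚ) := by
      rw [← hNdef] at hk
      exact_mod_cast hk
    rw [hkQ, ← mul_assoc, Rat.mul_den_eq_num]
    push_cast
    ring
  choose zf hzf using hcN
  set M : ℚ := ∑ p : Fin r × Fin n, |c p.1 p.2| with hM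
  have hsumM : ∀ j, (∑ i, |c i j|) ≤ M := by
    intro j
    rw [hM, Fintype.sum_prod_type]
    refine Finset.sum_le_sum fun i _ => ?_
    exact Finset.single_le_sum (f := fun j' => |c i j'|) (fun j' _ => abs_nonneg _)
      (Finset.mem_univ j)
  have hrepr : ∀ (q : Fin r → ℚ) (h : (∑ i, q i • a i) ∈ V) (j : Fin n),
      b.repr ⟨∑ i, q i • a i, h⟩ j = ∑ i, q i * c i j := by
    intro q h j
    have hval : (⟨∑ i, q i • a i, h⟩ : V) = ∑ i, q i • (⟨a i, haV i⟩ : V) := by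
      apply Subtype.ext
      simp
    rw [hval]
    simp only [map_sum, map_smul, Finsupp.coe_finset_sum, Finset.sum_apply, Finsupp.coe_smul,
      Pi.smul_apply, smul_eq_mul]
    rfl
  set fmap : B → Fin n → ℚ :=
    fun x => if h : x ∈ V then (fun j => b.repr ⟨x, h⟩ j) else 0 with hfmap
  set D : Set B :=
    {x : B | x ∈ AA ∧ ∃ f : Fin r → ℚ, (∀ i, 0 ≤ f i ∧ f i ≤ 1) ∧ x = ∑ i, f i • a i} with hD
  have hDfin : D.Finite := by
    have hTfin : (Set.pi Set.univ fun _ : Fin n =>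
        (fun z : ℤ => (z : ℚ) / N) '' Set.Icc (-⌈M * N⌉) ⌈M * N⌉).Finite :=
      Set.Finite.pi fun _ => (Set.finite_Icc _ _).image _
    refine Set.Finite.of_finite_image (f := fmap) (hTfin.subset ?_) ?_
    · rintro _ ⟨x, ⟨⟨m, hm⟩, f, hf, hfx⟩, rfl⟩
      intro j _
      have hxV : x ∈ V := hfx ▸ hmemV f
      have hfmapx : fmap x = fun j => b.repr ⟨x, hxV⟩ j := by
        rw [hfmap]; exact dif_pos hxV
      have key : ∀ q : Fin r → ℚ, x = ∑ i, q i • a i →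
          ∀ j, fmap x j = ∑ i, q i * c i j := by
        intro q hq j
        have hval : (⟨x, hxV⟩ : V) = ⟨∑ i, q i • a i, hmemV q⟩ := Subtype.ext hq
        rw [hfmapx]
        simp only [hval]
        exact hrepr q _ j
      have e1 : fmap x j = ∑ i, (m i : ℚ) * c i j := key _ hm j
      have e2 : fmap x j = ∑ i, f i * c i j := key _ hfx j
      have hZ : fmap x j * N = ((∑ i, m i * zf i j : ℤ) : ℚ) := by
        rw [e1, Finset.sum_mul]
        push_cast
        refine Finset.sum_congr rfl fun i _ => ?_
        rw [mul_assoc, hzf i j]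
      have hbound : |fmap x j| ≤ M := by
        rw [e2]
        calc |∑ i, f i * c i j| ≤ ∑ i, |f i * c i j| := Finset.abs_sum_le_sum_abs _ _
          _ ≤ ∑ i, |c i j| := by
              refine Finset.sum_le_sum fun i _ => ?_
              rw [abs_mul]
              have h0 := (hf i).1
              have h1 := (hf i).2
              have hfabs : |f i| ≤ 1 := abs_le.mpr ⟨by linarith, h1⟩
              calc |f i| * |c i j| ≤ 1 * |c i j| :=
                    mul_le_mul_of_nonneg_right hfabs (abs_nonneg _)
                _ = |c i j| := one_mul _
          _ ≤ M := hsumM j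
      refine ⟨∑ i, m i * zf i j, ?_, ?_⟩
      · rw [Set.mem_Icc, ← abs_le]
        have h1 : |((∑ i, m i * zf i j : ℤ) : ℚ)| ≤ M * N := by
          rw [← hZ, abs_mul, abs_of_pos hNpos]
          exact mul_le_mul_of_nonneg_right hbound (le_of_lt hNpos)
        have h2 : ((|∑ i, m i * zf i j| : ℤ) : ℚ) ≤ ((⌈M * N⌉ : ℤ) : ℚ) := by
          rw [Int.cast_abs]
          exact h1.trans (Int.le_ceil _)
        exact_mod_cast h2
      · show ((∑ i, m i * zf i j : ℤ) : ℚ) / (N : ℚ) = fmap x j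
        rw [← hZ, mul_div_assoc, div_self (ne_of_gt hNpos), mul_one]
    · intro x hx y hy hxy
      have hxV : x ∈ V := by obtain ⟨f, _, hfx⟩ := hx.2; exact hfx ▸ hmemV f
      have hyV : y ∈ V := by obtain ⟨f, _, hfy⟩ := hy.2; exact hfy ▸ hmemV f
      rw [hfmap] at hxy
      simp only [dif_pos hxV, dif_pos hyV] at hxy
      have : (⟨x, hxV⟩ : V) = ⟨y, hyV⟩ := by
        apply b.repr.injective
        ext j
        exact congrFun hxy j
      exact congrArg Subtype.val this
  -- decomposition of elements of A ∩ C
  have hdecomp : ∀ x ∈ AA ∩ CC, ∃ t ∈ SS, ∃ d ∈ D, x = t + d := by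
    rintro x ⟨⟨m, hm⟩, ⟨q, hq0, hqx⟩⟩
    refine ⟨∑ i, ((⌊q i⌋₊ : ℕ) : ℚ) • a i, memS _,
      x - ∑ i, ((⌊q i⌋₊ : ℕ) : ℚ) • a i, ⟨?_, ?_⟩, by abel⟩
    · refine ⟨fun i => m i - ⌊q i⌋₊, ?_⟩
      rw [hm, ← Finset.sum_sub_distrib]
      refine Finset.sum_congr rfl fun i _ => ?_
      dsimp only
      push_cast
      rw [sub_smul]
    · refine ⟨fun i => q i - ⌊q i⌋₊, fun i => ⟨?_, ?_⟩, ?_⟩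
      · dsimp only; have := Nat.floor_le (hq0 i); linarith
      · dsimp only; have := Nat.lt_floor_add_one (q i); linarith
      · rw [hqx, ← Finset.sum_sub_distrib]
        exact Finset.sum_congr rfl fun i _ => by dsimp only; rw [sub_smul]
  -- choose translations for each element of D
  have hDs : ∀ d : B, ∃ s : B, d ∈ D → s ∈ SS ∧ s + d ∈ SS := by
    intro d
    by_cases hd : d ∈ D
    · obtain ⟨m, hm⟩ := hd.1
      obtain ⟨s, hs, hsd⟩ := hshift m
      exact ⟨s, fun _ => ⟨hs, by rw [hm]; exact hsd⟩⟩
    · exact ⟨0, fun h => absurd h hd⟩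
  choose sd hsd using hDs
  set s := ∑ d ∈ hDfin.toFinset, sd d with hsdef
  have hsS : s ∈ SS := hsumS _ _ fun d hd => (hsd d (hDfin.mem_toFinset.mp hd)).1
  have hmain : ∀ x ∈ AA ∩ CC, s + x ∈ SS := by
    intro x hx
    obtain ⟨t, ht, d, hd, rfl⟩ := hdecomp x hx
    have hdmem : d ∈ hDfin.toFinset := hDfin.mem_toFinset.mpr hd
    have hrest : (∑ d' ∈ hDfin.toFinset.erase d, sd d') ∈ SS :=
      hsumS _ _ fun d' hd' =>
        (hsd d' (hDfin.mem_toFinset.mp (Finset.mem_of_mem_erase hd'))).1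
    have hsplit : s = sd d + ∑ d' ∈ hDfin.toFinset.erase d, sd d' :=
      (Finset.add_sum_erase _ _ hdmem).symm
    have hre : s + (t + d) = ((sd d + d) + t) + ∑ d' ∈ hDfin.toFinset.erase d, sd d' := by
      rw [hsplit]; abel
    rw [hre]
    exact haddS _ (haddS _ (hsd d hd).2 t ht) _ hrest
  refine ⟨s, hsS, ?_, ?_, fun x hx => ⟨hSA hx, hSC hx⟩⟩
  · ext x
    constructor
    · rintro ⟨hxA, y, hyC, rfl⟩
      refine ⟨y, ⟨?_, hyC⟩, rfl⟩
      have h := hsubA _ hxA s (hSA hsS)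
      simpa using h
    · rintro ⟨y, ⟨hyA, hyC⟩, rfl⟩
      exact ⟨haddA s (hSA hsS) y hyA, y, hyC, rfl⟩
  · rintro _ ⟨y, hy, rfl⟩
    exact hmain y hy
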